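/- Let X ∈ ℝ^{n×p} have full column rank (so XᵀX is invertible), with columns x₁, …, x_p, and for each j let r_j = x_j − H_{[j]}x_j be the residual of x_j from its orthogonal projection onto the span of the other columns. Then for all indices j, k, the (j,k) entry of (XᵀX)⁻¹ equals ⟨r_j, r_k⟩/(‖r_j‖²·‖r_k‖²); in particular, the j-th diagonal entry of (XᵀX)⁻¹ equals 1/‖r_j‖². Equivalently, the matrix with entries ⟨r_j, r_k⟩ equals D·(XᵀX)⁻¹·D where D = diag(‖r₁‖², …, ‖r_p‖²). -/
import Mathlib

open Matrix

/-- The Gram matrix of a family of linearly independent columns is invertible. -/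
lemma gram_isUnit_of_linearIndependent {n m : ℕ} (A : Matrix (Fin n) (Fin m) ℝ)
    (h : LinearIndependent ℝ (fun j : Fin m => fun i : Fin n => A i j)) :
    IsUnit (Aᵀ * A).det := by
  rw [isUnit_iff_ne_zero]
  intro hdet
  obtain ⟨v, hv0, hv⟩ := Matrix.exists_mulVec_eq_zero_iff.mpr hdet
  have hAv : A *ᵥ v = 0 := by
    have h1 : v ⬝ᵥ ((Aᵀ * A) *ᵥ v) = 0 := by rw [hv, dotProduct_zero]
    rw [← Matrix.mulVec_mulVec, Matrix.dotProduct_mulVec, Matrix.vecMul_transpose] at h1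
    exact dotProduct_self_eq_zero.mp h1
  apply hv0
  have := Fintype.linearIndependent_iff.mp h v ?_
  · funext j; exact this j
  · funext i
    have := congrFun hAv i
    simpa [Matrix.mulVec, dotProduct, mul_comm] using this

theorem inv_gram_entries_eq_residual_inner
    {n p : ℕ} (hn : 0 < n)
    (X : Matrix (Fin n) (Fin (p + 1)) ℝ)
    -- full column rank
    (hrank : LinearIndependent ℝ (fun j : Fin (p + 1) => fun i : Fin n => X i j))
    -- so `XᵀX` is invertible
    (hXunit : IsUnit (Xᵀ * X).det)
    -- residual of column `j` on the remaining columns: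
    -- `r_j = x_j − X_{[j]}(X_{[j]}ᵀX_{[j]})⁻¹X_{[j]}ᵀ x_j`
    (r : Fin (p + 1) → Fin n → ℝ)
    (hr : ∀ j, r j = (fun i => X i j) -
      (X.submatrix id j.succAbove *
          ((X.submatrix id j.succAbove)ᵀ * X.submatrix id j.succAbove)⁻¹ *
          (X.submatrix id j.succAbove)ᵀ) *ᵥ (fun i => X i j))
    (D : Matrix (Fin (p + 1)) (Fin (p + 1)) ℝ)
    (hD : D = Matrix.diagonal fun j => r j ⬝ᵥ r j) :
    (∀ j k, (Xᵀ * X)⁻¹ j k = (r j ⬝ᵥ r k) / ((r j ⬝ᵥ r j) * (r k ⬝ᵥ r k))) ∧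
      (∀ j, (Xᵀ * X)⁻¹ j j = 1 / (r j ⬝ᵥ r j)) ∧
      (Matrix.of fun j k => r j ⬝ᵥ r k) = D * (Xᵀ * X)⁻¹ * D := by
  set S := Xᵀ * X with hS
  set d : Fin (p + 1) → ℝ := fun j => r j ⬝ᵥ r j with hd
  set Y : Fin (p + 1) → Matrix (Fin n) (Fin p) ℝ := fun j => X.submatrix id j.succAbove
    with hY
  set b : (j : Fin (p + 1)) → Fin p → ℝ :=
    fun j => ((Y j)ᵀ * Y j)⁻¹ *ᵥ ((Y j)ᵀ *ᵥ fun i => X i j) with hb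
  -- the Gram matrices of the reduced matrices are invertible
  have hYunit : ∀ j, IsUnit ((Y j)ᵀ * (Y j)).det := by
    intro j
    exact gram_isUnit_of_linearIndependent (Y j)
      (hrank.comp j.succAbove Fin.succAbove_right_injective)
  -- rewrite r j
  have hrj : ∀ j, r j = (fun i => X i j) - Y j *ᵥ b j := by
    intro j
    rw [hr j]
    congr 1
    rw [← Matrix.mulVec_mulVec, ← Matrix.mulVec_mulVec]
  -- orthogonality of the residual to the other columns
  have horth : ∀ j, (Y j)ᵀ *ᵥ r j = 0 := by
    intro j
    rw [hrj j, Matrix.mulVec_sub, hb]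
    simp only [Matrix.mulVec_mulVec, ← Matrix.mul_assoc]
    rw [Matrix.mul_nonsing_inv _ (hYunit j), Matrix.one_mul, sub_self]
  -- key: Xᵀ r j = d j • e_j
  have key : ∀ j, Xᵀ *ᵥ r j = fun k => if k = j then d j else 0 := by
    intro j
    funext k
    rcases eq_or_ne k j with rfl | hk
    · -- diagonal entry
      have hx : (fun i => X i k) = r k + Y k *ᵥ b k := by
        rw [hrj k]; funext i; simp
      have h1 : (Xᵀ *ᵥ r k) k = (fun i => X i k) ⬝ᵥ r k := by
        simp [Matrix.mulVec, dotProduct, Matrix.transpose_apply]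
      rw [h1, hx, add_dotProduct]
      have h2 : (Y k *ᵥ b k) ⬝ᵥ r k = 0 := by
        rw [← Matrix.vecMul_transpose, ← Matrix.dotProduct_mulVec, horth k,
          dotProduct_zero]
      simp [h2, hd]
    · obtain ⟨l, hl⟩ := Fin.exists_succAbove_eq hk
      simp only [if_neg hk]
      calc (Xᵀ *ᵥ r j) k = ((Y j)ᵀ *ᵥ r j) l := by
            subst hl
            simp [Matrix.mulVec, dotProduct, hY]
        _ = 0 := by rw [horth j]; rfl
  -- the coefficient vector of r j in the columns of X
  set c : (j : Fin (p + 1)) → Fin (p + 1) → ℝ :=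
    fun j => Pi.single j 1 -
      ((1 : Matrix (Fin (p + 1)) (Fin (p + 1)) ℝ).submatrix id j.succAbove) *ᵥ b j with hc
  have hXone : ∀ j, X * ((1 : Matrix (Fin (p + 1)) (Fin (p + 1)) ℝ).submatrix id j.succAbove)
      = Y j := by
    intro j
    ext i l
    simp [Matrix.mul_apply, Matrix.one_apply, hY]
  have hXc : ∀ j, X *ᵥ c j = r j := by
    intro j
    rw [hc, hrj j]
    simp only [Matrix.mulVec_sub, Matrix.mulVec_mulVec, hXone j]
    congr 1
    funext i
    simp
  have hcjj : ∀ j, c j j = 1 := by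
    intro j
    simp only [hc, Pi.sub_apply, Pi.single_eq_same]
    have : (((1 : Matrix (Fin (p + 1)) (Fin (p + 1)) ℝ).submatrix id j.succAbove) *ᵥ b j) j
        = 0 := by
      simp only [Matrix.mulVec, dotProduct, Matrix.submatrix_apply, id_eq]
      apply Finset.sum_eq_zero
      intro l _
      simp [Matrix.one_apply, Fin.ne_succAbove j l]
    rw [this, sub_zero]
  have hSc : ∀ j, S *ᵥ c j = fun k => if k = j then d j else 0 := by
    intro j
    rw [hS, ← Matrix.mulVec_mulVec, hXc j, key j]
  have hck : ∀ j k, c j k = S⁻¹ k j * d j := by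
    intro j k
    have h1 : c j = S⁻¹ *ᵥ (S *ᵥ c j) := by
      rw [Matrix.mulVec_mulVec, Matrix.nonsing_inv_mul _ hXunit, Matrix.one_mulVec]
    have h2 := congrFun h1 k
    rw [hSc j] at h2
    rw [h2]
    simp [Matrix.mulVec, dotProduct, mul_ite, mul_zero, Finset.sum_ite_eq']
  have dne : ∀ j, d j ≠ 0 := by
    intro j h0
    have := hck j j
    rw [hcjj j, h0, mul_zero] at this
    exact one_ne_zero this
  have hSsymm : ∀ j k, S⁻¹ k j = S⁻¹ j k := by
    intro j k
    have hST : Sᵀ = S := by rw [hS, Matrix.transpose_mul, Matrix.transpose_transpose]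
    have hinvT : (S⁻¹)ᵀ = S⁻¹ := by rw [Matrix.transpose_nonsing_inv, hST]
    calc S⁻¹ k j = (S⁻¹)ᵀ j k := rfl
      _ = S⁻¹ j k := by rw [hinvT]
  have main : ∀ j k, r j ⬝ᵥ r k = d j * d k * S⁻¹ j k := by
    intro j k
    have h1 : r j ⬝ᵥ r k = c j ⬝ᵥ (Xᵀ *ᵥ r k) := by
      rw [← hXc j, ← Matrix.vecMul_transpose, ← Matrix.dotProduct_mulVec]
    rw [h1, key k]
    have h3 : c j ⬝ᵥ (fun m => if m = k then d k else 0) = c j k * d k := by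
      simp [dotProduct, mul_ite, mul_zero, Finset.sum_ite_eq']
    rw [h3, hck j k, hSsymm j k]
    ring
  refine ⟨?_, ?_, ?_⟩
  · intro j k
    rw [main j k, mul_div_cancel_left₀ _ (mul_ne_zero (dne j) (dne k))]
  · intro j
    have h := main j j
    rw [eq_div_iff (dne j)]
    exact mul_left_cancel₀ (dne j) (by linear_combination -h)
  · ext j k
    rw [hD, Matrix.mul_diagonal, Matrix.diagonal_mul, Matrix.of_apply, main j k]
    ring
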